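/- arXiv:2110.00930 — 4 statements merged into one kernel-verified Lean document; each statement's English description precedes it below -/
import Mathlib

section
/- In a category base (X, C), the intersection of two regions either contains a region or is a singular set. -/
open Set

/-- A category base: a family of subsets covering `X`, whose nonempty members
are called *regions*, satisfying Morgan's axioms. -/
structure CategoryBase (X : Type*) where
  base : Set (Set X)
  cover : ⋃₀ base = Set.univ
  ax2a : ∀ A ∈ base, A.Nonempty → ∀ D ⊆ base, D.Nonempty → (∀ d ∈ D, d.Nonempty) →
    D.Pairwise Disjoint → Cardinal.mk ↥D < Cardinal.mk ↥base →
    (∃ B ∈ base, B.Nonempty ∧ B ⊆ A ∩ ⋃₀ D) →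
      ∃ d ∈ D, ∃ B ∈ base, B.Nonempty ∧ B ⊆ A ∩ d
  ax2b : ∀ A ∈ base, A.Nonempty → ∀ D ⊆ base, D.Nonempty → (∀ d ∈ D, d.Nonempty) →
    D.Pairwise Disjoint → Cardinal.mk ↥D < Cardinal.mk ↥base →
    (¬ ∃ B ∈ base, B.Nonempty ∧ B ⊆ A ∩ ⋃₀ D) →
      ∃ B ∈ base, B.Nonempty ∧ B ⊆ A ∧ ∀ d ∈ D, Disjoint B d

namespace CategoryBase

variable {X : Type*} (cb : CategoryBase X)

/-- A region is a nonempty member of the base. -/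
def IsRegion (A : Set X) : Prop := A ∈ cb.base ∧ A.Nonempty

/-- `S` is singular if every region contains a subregion disjoint from `S`. -/
def Singular (S : Set X) : Prop :=
  ∀ A, cb.IsRegion A → ∃ B, cb.IsRegion B ∧ B ⊆ A ∧ Disjoint B S

/-- `S` is meager if it is a countable union of singular sets. -/
def Meager (S : Set X) : Prop :=
  ∃ f : ℕ → Set X, (∀ n, cb.Singular (f n)) ∧ S = ⋃ n, f n

/-- `S` is abundant if it is not meager. -/
def Abundant (S : Set X) : Prop := ¬ cb.Meager S

/-- `S` is abundant everywhere in the region `A` : `S` is abundant in every subregion of `A`. -/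
def AbundantEverywhereIn (S A : Set X) : Prop :=
  ∀ B, cb.IsRegion B → B ⊆ A → cb.Abundant (S ∩ B)

/-- `S` is a Baire set if every region has a subregion in which `S` or its complement is meager. -/
def BaireSet (S : Set X) : Prop :=
  ∀ A, cb.IsRegion A → ∃ B, cb.IsRegion B ∧ B ⊆ A ∧
    (cb.Meager (S ∩ B) ∨ cb.Meager (Sᶜ ∩ B))

/-- `S` is locally abundant at `x`. -/
def LocallyAbundantAt (S : Set X) (x : X) : Prop :=
  ∃ A, cb.IsRegion A ∧ x ∈ A ∧ ∀ B, cb.IsRegion B → B ⊆ A → x ∈ B → cb.Abundant (S ∩ B)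

/-- The set of cluster points of `S`. -/
def cluster (S : Set X) : Set X := {x | cb.LocallyAbundantAt S x}

end CategoryBase

/-- `S` is open in the `D`-topology iff `D (X \ S) ⊆ X \ S`. -/
def DOpen {X : Type*} (D : Set X → Set X) (S : Set X) : Prop := D Sᶜ ⊆ Sᶜ

/-- `S` is nowhere dense in the `D`-topology: every nonempty `D`-open set contains a
nonempty `D`-open subset disjoint from `S`. -/
def TauNowhereDense {X : Type*} (D : Set X → Set X) (S : Set X) : Prop :=
  ∀ U, DOpen D U → U.Nonempty → ∃ V, DOpen D V ∧ V.Nonempty ∧ V ⊆ U ∧ Disjoint V S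

/-- `S` is of the first category in the `D`-topology: a countable union of nowhere dense sets. -/
def TauFirstCategory {X : Type*} (D : Set X → Set X) (S : Set X) : Prop :=
  ∃ f : ℕ → Set X, (∀ n, TauNowhereDense D (f n)) ∧ S = ⋃ n, f n

/-- `S` has the Baire property in the `D`-topology: it differs from a `D`-open set by a
first category set. -/
def TauBaireProperty {X : Type*} (D : Set X → Set X) (S : Set X) : Prop :=
  ∃ U, DOpen D U ∧ TauFirstCategory D ((S \ U) ∪ (U \ S))

/-- In a category base, the intersection of two regions either contains a region
or is a singular set. -/
theorem stmt_4 {X : Type*} (cb : CategoryBase X) (A B : Set X)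
    (hA : cb.IsRegion A) (hB : cb.IsRegion B) :
    (∃ C, cb.IsRegion C ∧ C ⊆ A ∩ B) ∨ cb.Singular (A ∩ B) := by
  obtain ⟨hAb, hAne⟩ := hA
  obtain ⟨hBb, hBne⟩ := hB
  by_cases hcard : (1 : Cardinal) < Cardinal.mk ↥cb.base
  · by_cases hex : ∃ C, cb.IsRegion C ∧ C ⊆ A ∩ B
    · exact Or.inl hex
    · right
      intro E hE
      obtain ⟨hEb, hEne⟩ := hE
      have hsingA : ∀ (W : Set X), W ∈ cb.base →
          Cardinal.mk ↥({W} : Set (Set X)) < Cardinal.mk ↥cb.base := by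
        intro W hW
        simpa using hcard
      have hDsub : ∀ (W : Set X), W ∈ cb.base → ({W} : Set (Set X)) ⊆ cb.base := by
        intro W hW x hx; simp only [Set.mem_singleton_iff] at hx; subst hx; exact hW
      -- first step: region inside E ∩ A or subregion of E disjoint from A
      by_cases h1 : ∃ F ∈ cb.base, F.Nonempty ∧ F ⊆ E ∩ ⋃₀ ({A} : Set (Set X))
      · obtain ⟨F, hFb, hFne, hFsub⟩ := h1
        rw [Set.sUnion_singleton] at hFsub
        -- second step inside F with {B}
        by_cases h2 : ∃ G ∈ cb.base, G.Nonempty ∧ G ⊆ F ∩ ⋃₀ ({B} : Set (Set X))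
        · exfalso
          obtain ⟨G, hGb, hGne, hGsub⟩ := h2
          rw [Set.sUnion_singleton] at hGsub
          exact hex ⟨G, ⟨hGb, hGne⟩, fun x hx =>
            ⟨(hFsub (hGsub hx).1).2, (hGsub hx).2⟩⟩
        · obtain ⟨G, hGb, hGne, hGsub, hGdisj⟩ :=
            cb.ax2b F hFb hFne {B} (hDsub B hBb) ⟨B, rfl⟩
              (by rintro d rfl; exact hBne) (Set.pairwise_singleton _ _)
              (hsingA B hBb) h2
          refine ⟨G, ⟨hGb, hGne⟩, fun x hx => (hFsub (hGsub hx)).1, ?_⟩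
          exact Disjoint.mono_right Set.inter_subset_right (hGdisj B rfl)
      · obtain ⟨F, hFb, hFne, hFsub, hFdisj⟩ :=
          cb.ax2b E hEb hEne {A} (hDsub A hAb) ⟨A, rfl⟩
            (by rintro d rfl; exact hAne) (Set.pairwise_singleton _ _)
            (hsingA A hAb) h1
        refine ⟨F, ⟨hFb, hFne⟩, hFsub, ?_⟩
        exact Disjoint.mono_right Set.inter_subset_left (hFdisj A rfl)
  · -- base is subsingleton, so A = B
    push_neg at hcard
    have hsub : (cb.base : Set (Set X)).Subsingleton :=
      Cardinal.mk_le_one_iff_set_subsingleton.mp hcard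
    have : A = B := hsub hAb hBb
    subst this
    exact Or.inl ⟨A, ⟨hAb, hAne⟩, by simp⟩
end

section
/- In a category base (X, C), if a set S is abundant, then there exists a region C such that S is abundant in every subregion of C (the Fundamental Theorem). -/
open Set

namespace CB6Aux
open Cardinal Ordinal
open scoped Classical

variable {X : Type*} (cb : CategoryBase X) (S : Set X)

/-- The well-ordered index type with order type the initial ordinal of `#base`. -/
abbrev T (cb : CategoryBase X) : Type _ := (Cardinal.mk ↥cb.base).ord.ToType

/-- Transfinitely chosen disjoint family of regions on which `S` is meager. -/
noncomputable def fam (e : T cb → Set X) : T cb → Set X :=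
  (IsWellFounded.wf (α := T cb) (r := (· < ·))).fix
    (fun x ih =>
      if h : ∃ d, cb.IsRegion d ∧ d ⊆ e x ∧ cb.Meager (S ∩ d) ∧
          ∀ y, ∀ hy : y < x, Disjoint d (ih y hy)
      then h.choose else ∅)

lemma fam_eq (e : T cb → Set X) (x : T cb) :
    fam cb S e x =
      if h : ∃ d, cb.IsRegion d ∧ d ⊆ e x ∧ cb.Meager (S ∩ d) ∧
          ∀ y, ∀ _ : y < x, Disjoint d (fam cb S e y)
      then h.choose else ∅ :=
  WellFounded.fix_eq _ _ _

lemma fam_spec (e : T cb → Set X) (x : T cb) (h : (fam cb S e x).Nonempty) :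
    cb.IsRegion (fam cb S e x) ∧ fam cb S e x ⊆ e x ∧ cb.Meager (S ∩ fam cb S e x) ∧
      ∀ y, y < x → Disjoint (fam cb S e x) (fam cb S e y) := by
  by_cases hc : ∃ d, cb.IsRegion d ∧ d ⊆ e x ∧ cb.Meager (S ∩ d) ∧
      ∀ y, ∀ _ : y < x, Disjoint d (fam cb S e y)
  · rw [fam_eq, dif_pos hc]
    exact hc.choose_spec
  · rw [fam_eq, dif_neg hc] at h
    exact absurd rfl h.ne_empty

lemma star (hcon : ∀ A, cb.IsRegion A → ∃ B, cb.IsRegion B ∧ B ⊆ A ∧ cb.Meager (S ∩ B))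
    (e : T cb → Set X) (hsurj : ∀ A ∈ cb.base, ∃ x, e x = A) :
    ∀ A, cb.IsRegion A → ∃ x, (fam cb S e x).Nonempty ∧
      ∃ B, cb.IsRegion B ∧ B ⊆ A ∩ fam cb S e x := by
  intro A hA
  obtain ⟨x, hx⟩ := hsurj A hA.1
  subst hx
  by_cases hne : (fam cb S e x).Nonempty
  · obtain ⟨hreg, hsub, -, -⟩ := fam_spec cb S e x hne
    exact ⟨x, hne, fam cb S e x, hreg, subset_inter hsub le_rfl⟩
  · have hfail : ¬ ∃ d, cb.IsRegion d ∧ d ⊆ e x ∧ cb.Meager (S ∩ d) ∧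
        ∀ y, ∀ _ : y < x, Disjoint d (fam cb S e y) := by
      intro hc
      apply hne
      rw [fam_eq, dif_pos hc]
      exact hc.choose_spec.1.2
    set D' : Set (Set X) := {d | d.Nonempty ∧ ∃ y, y < x ∧ fam cb S e y = d} with hD'
    have hallD' : ∀ y, y < x → (fam cb S e y).Nonempty → fam cb S e y ∈ D' :=
      fun y hy hne' => ⟨hne', y, hy, rfl⟩
    have hD'base : D' ⊆ cb.base := by
      rintro d ⟨hdne, y, hy, rfl⟩
      exact (fam_spec cb S e y hdne).1.1
    have hD'nonemp : ∀ d ∈ D', d.Nonempty := fun d hd => hd.1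
    have hD'disj : D'.Pairwise Disjoint := by
      rintro d ⟨hd1, y, hy, rfl⟩ d' ⟨hd1', y', hy', rfl⟩ hne'
      have hyy : y ≠ y' := fun h => hne' (by rw [h])
      rcases hyy.lt_or_gt with h | h
      · exact ((fam_spec cb S e y' hd1').2.2.2 y h).symm
      · exact (fam_spec cb S e y hd1).2.2.2 y' h
    have hD'card : Cardinal.mk ↥D' < Cardinal.mk ↥cb.base := by
      have h1 : D' ⊆ Set.range (fun y : {y : T cb // y < x} => fam cb S e y.1) := by
        rintro d ⟨hd1, y, hy, rfl⟩; exact ⟨⟨y, hy⟩, rfl⟩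
      calc Cardinal.mk ↥D' ≤ Cardinal.mk ↥(Set.range
            (fun y : {y : T cb // y < x} => fam cb S e y.1)) := Cardinal.mk_le_mk_of_subset h1
        _ ≤ Cardinal.mk {y : T cb // y < x} := Cardinal.mk_range_le
        _ < _ := Cardinal.mk_Iio_ord_toType x
    have hEx : ∃ B ∈ cb.base, B.Nonempty ∧ B ⊆ (e x) ∩ ⋃₀ D' := by
      by_contra hnEx
      rcases eq_empty_or_nonempty D' with hDe | hDne
      · obtain ⟨d, hdreg, hdsub, hdm⟩ := hcon (e x) hA
        refine hfail ⟨d, hdreg, hdsub, hdm, fun y hy => ?_⟩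
        have : fam cb S e y = ∅ := by
          by_contra hne'
          have := hallD' y hy (nonempty_iff_ne_empty.2 hne')
          rw [hDe] at this
          exact this
        rw [this]
        exact disjoint_bot_right
      · obtain ⟨B, hBb, hBne, hBsub, hBdisj⟩ :=
          cb.ax2b (e x) hA.1 hA.2 D' hD'base hDne hD'nonemp hD'disj hD'card hnEx
        obtain ⟨d, hdreg, hdsub, hdm⟩ := hcon B ⟨hBb, hBne⟩
        refine hfail ⟨d, hdreg, hdsub.trans hBsub, hdm, fun y hy => ?_⟩
        rcases eq_empty_or_nonempty (fam cb S e y) with h0 | h1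
        · rw [h0]; exact disjoint_bot_right
        · exact ((hBdisj _ (hallD' y hy h1)).mono_left hdsub)
    obtain ⟨d, hdD', B, hBb, hBne, hBsub⟩ :=
      cb.ax2a (e x) hA.1 hA.2 D' hD'base
        (let ⟨B, _, hBne, hBsub⟩ := hEx
         let ⟨b, hb⟩ := hBne
         let ⟨t, ht, _⟩ := (hBsub hb).2
         ⟨t, ht⟩)
        hD'nonemp hD'disj hD'card hEx
    obtain ⟨hdne, y, hy, rfl⟩ := hdD'
    exact ⟨y, hdne, B, ⟨hBb, hBne⟩, hBsub⟩

end CB6Aux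

/-- The Fundamental Theorem: every abundant set is abundant everywhere in some region. -/
theorem stmt_6 {X : Type*} (cb : CategoryBase X) (S : Set X) (hS : cb.Abundant S) :
    ∃ C, cb.IsRegion C ∧ cb.AbundantEverywhereIn S C := by
  by_contra hno
  push_neg at hno
  have hcon : ∀ A, cb.IsRegion A → ∃ B, cb.IsRegion B ∧ B ⊆ A ∧ cb.Meager (S ∩ B) := by
    intro A hA
    have h := hno A hA
    simp only [CategoryBase.AbundantEverywhereIn, CategoryBase.Abundant] at h
    push_neg at h
    obtain ⟨B, hB, hBA, hab⟩ := h
    exact ⟨B, hB, hBA, hab⟩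
  obtain ⟨eqv⟩ : Nonempty (CB6Aux.T cb ≃ ↥cb.base) :=
    Cardinal.eq.1 (Cardinal.mk_ord_toType _)
  set e : CB6Aux.T cb → Set X := fun x => ((eqv x : ↥cb.base) : Set X) with he
  have hsurj : ∀ A ∈ cb.base, ∃ x, e x = A := fun A hA =>
    ⟨eqv.symm ⟨A, hA⟩, by simp [he]⟩
  set f : CB6Aux.T cb → Set X := CB6Aux.fam cb S e with hf
  have hstar := CB6Aux.star cb S hcon e hsurj
  set D : Set (Set X) := {d | d.Nonempty ∧ ∃ x, f x = d} with hD
  have hDspec : ∀ d ∈ D, cb.IsRegion d ∧ cb.Meager (S ∩ d) := by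
    rintro d ⟨hdne, x, rfl⟩
    obtain ⟨h1, -, h3, -⟩ := CB6Aux.fam_spec cb S e x hdne
    exact ⟨h1, h3⟩
  have hDdisj : D.Pairwise Disjoint := by
    rintro d ⟨hd1, y, rfl⟩ d' ⟨hd1', y', rfl⟩ hne'
    have hyy : y ≠ y' := fun h => hne' (by rw [h])
    rcases hyy.lt_or_gt with h | h
    · exact ((CB6Aux.fam_spec cb S e y' hd1').2.2.2 y h).symm
    · exact (CB6Aux.fam_spec cb S e y hd1).2.2.2 y' h
  have hstar' : ∀ A, cb.IsRegion A → ∃ d ∈ D, ∃ B, cb.IsRegion B ∧ B ⊆ A ∩ d := by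
    intro A hA
    obtain ⟨x, hne, B, hB, hBsub⟩ := hstar A hA
    exact ⟨f x, ⟨hne, x, rfl⟩, B, hB, hBsub⟩
  have hM : ∀ d : D, cb.Meager (S ∩ (d : Set X)) := fun d => (hDspec d d.2).2
  choose g hsing hun using hM
  set U : ℕ → Set X := fun n => ⋃ d : D, g d n with hU
  have hgsub : ∀ (d : D) n, g d n ⊆ S ∩ (d : Set X) := fun d n =>
    (subset_iUnion (g d) n).trans (hun d).symm.subset
  have hUsing : ∀ n, cb.Singular (U n) := by
    intro n A hA
    obtain ⟨d, hdD, B, hB, hBsub⟩ := hstar' A hA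
    obtain ⟨B', hB', hB'sub, hB'dis⟩ := hsing ⟨d, hdD⟩ n B hB
    refine ⟨B', hB', hB'sub.trans (hBsub.trans inter_subset_left), ?_⟩
    refine disjoint_iUnion_right.2 fun d' => ?_
    by_cases hdd : (d' : Set X) = d
    · have hd' : d' = ⟨d, hdD⟩ := Subtype.ext hdd
      rw [hd']; exact hB'dis
    · have hdisj : Disjoint d (d' : Set X) := hDdisj hdD d'.2 (fun h => hdd h.symm)
      have hsubd : B' ⊆ d := hB'sub.trans (hBsub.trans inter_subset_right)
      exact hdisj.mono hsubd ((hgsub d' n).trans inter_subset_right)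
  have hrest : cb.Singular (S \ ⋃ d : D, (d : Set X)) := by
    intro A hA
    obtain ⟨d, hdD, B, hB, hBsub⟩ := hstar' A hA
    refine ⟨B, hB, hBsub.trans inter_subset_left, ?_⟩
    rw [Set.disjoint_left]
    intro a haB ha
    exact ha.2 (mem_iUnion.2 ⟨⟨d, hdD⟩, (hBsub haB).2⟩)
  apply hS
  refine ⟨fun n => Nat.casesOn n (S \ ⋃ d : D, (d : Set X)) U, fun n => ?_, ?_⟩
  · cases n with
    | zero => exact hrest
    | succ m => exact hUsing m
  · ext a
    simp only [mem_iUnion]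
    constructor
    · intro haS
      by_cases h : a ∈ ⋃ d : D, (d : Set X)
      · obtain ⟨d, hd⟩ := mem_iUnion.1 h
        have ha2 : a ∈ ⋃ n, g d n := by rw [← hun d]; exact ⟨haS, hd⟩
        obtain ⟨n, hn⟩ := mem_iUnion.1 ha2
        exact ⟨n+1, mem_iUnion.2 ⟨d, hn⟩⟩
      · exact ⟨0, haS, h⟩
    · rintro ⟨n, hn⟩
      cases n with
      | zero => exact hn.1
      | succ m =>
        obtain ⟨d, hd⟩ := mem_iUnion.1 hn
        exact ((hgsub d m) hd).1
end

section
/- In a category base (X, C), if B is an abundant Baire set, then there exists a region C such that C \ B is meager. -/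
open Set

/-- Morgan's fundamental lemma: if every region has a subregion in which `S` is
meager, then `S` is meager. -/
theorem CategoryBase.meager_of_loc {X : Type*} (cb : CategoryBase X) (S : Set X)
    (h : ∀ A, cb.IsRegion A → ∃ C, cb.IsRegion C ∧ C ⊆ A ∧ cb.Meager (S ∩ C)) :
    cb.Meager S := by
  classical
  have hmono : ∀ T T' : Set X, T' ⊆ T → cb.Singular T → cb.Singular T' := by
    intro T T' hsub hT A hA
    obtain ⟨C, hC, hCA, hd⟩ := hT A hA
    exact ⟨C, hC, hCA, hd.mono_right hsub⟩
  by_cases hreg : ∃ A, cb.IsRegion A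
  swap
  · exact ⟨fun _ => S, fun n A hA => absurd ⟨A, hA⟩ hreg, (Set.iUnion_const S).symm⟩
  obtain ⟨e⟩ : Nonempty ((Cardinal.mk ↥cb.base).ord.ToType ≃ ↥cb.base) :=
    Cardinal.eq.mp (Cardinal.mk_ord_toType _)
  set ι := (Cardinal.mk ↥cb.base).ord.ToType with hιdef
  let F : ∀ α : ι, (∀ β : ι, β < α → Set X) → Set X := fun α prev =>
    if hc : ∃ C, cb.IsRegion C ∧ C ⊆ (e α : Set X) ∧ ∀ β (hβ : β < α), Disjoint C (prev β hβ)
    then (h hc.choose hc.choose_spec.1).choose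
    else ∅
  let D : ι → Set X := fun α => (wellFounded_lt (α := ι)).fix F α
  have hD : ∀ α, D α = F α (fun β _ => D β) := fun α => WellFounded.fix_eq _ _ _
  have hPQ : ∀ α : ι,
      ((D α).Nonempty → cb.IsRegion (D α) ∧ D α ⊆ (e α : Set X) ∧ cb.Meager (S ∩ D α) ∧
        ∀ β, β < α → Disjoint (D α) (D β)) ∧
      ((∃ C, cb.IsRegion C ∧ C ⊆ (e α : Set X) ∧ ∀ β, β < α → Disjoint C (D β)) →
        (D α).Nonempty) := by
    intro α
    by_cases hc : ∃ C, cb.IsRegion C ∧ C ⊆ (e α : Set X) ∧ ∀ β (hβ : β < α),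
        Disjoint C ((fun β (_ : β < α) => D β) β hβ)
    · have hDα : D α = (h hc.choose hc.choose_spec.1).choose := by
        rw [hD α]; exact dif_pos hc
      obtain ⟨hreg', hsub, hM⟩ := (h hc.choose hc.choose_spec.1).choose_spec
      rw [hDα]
      exact ⟨fun _ => ⟨hreg', hsub.trans hc.choose_spec.2.1, hM, fun β hβ =>
        (hc.choose_spec.2.2 β hβ).mono_left hsub⟩, fun _ => hreg'.2⟩
    · have hDα : D α = ∅ := by rw [hD α]; exact dif_neg hc
      rw [hDα]
      exact ⟨fun hne => (Set.not_nonempty_empty hne).elim, fun hex => absurd hex hc⟩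
  have hdisj : ∀ α β : ι, α ≠ β → Disjoint (D α) (D β) := by
    intro α β hne
    rcases Set.eq_empty_or_nonempty (D α) with h0 | hα
    · rw [h0]; exact Set.empty_disjoint _
    rcases Set.eq_empty_or_nonempty (D β) with h0 | hβ
    · rw [h0]; exact Set.disjoint_empty _
    rcases hne.lt_or_gt with hlt | hlt
    · exact (((hPQ β).1 hβ).2.2.2 α hlt).symm
    · exact ((hPQ α).1 hα).2.2.2 β hlt
  have hK : ∀ α : ι, cb.IsRegion (e α : Set X) → ∃ β : ι, (D β).Nonempty ∧
      ∃ C, cb.IsRegion C ∧ C ⊆ (e α : Set X) ∩ D β := by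
    intro α hA
    rcases Set.eq_empty_or_nonempty (D α) with hα0 | hα
    swap
    · exact ⟨α, hα, D α, ((hPQ α).1 hα).1,
        Set.subset_inter ((hPQ α).1 hα).2.1 subset_rfl⟩
    have hnc : ¬∃ C, cb.IsRegion C ∧ C ⊆ (e α : Set X) ∧ ∀ β, β < α → Disjoint C (D β) := by
      intro hc
      exact absurd ((hPQ α).2 hc) (by rw [hα0]; exact Set.not_nonempty_empty)
    have hmem : ∀ d ∈ D '' {β : ι | β < α ∧ (D β).Nonempty},
        ∃ β : ι, β < α ∧ (D β).Nonempty ∧ d = D β := by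
      rintro d ⟨β, ⟨hβ, hne⟩, rfl⟩
      exact ⟨β, hβ, hne, rfl⟩
    have h𝔇ne : (D '' {β : ι | β < α ∧ (D β).Nonempty}).Nonempty := by
      by_contra hemp
      apply hnc
      refine ⟨(e α : Set X), hA, subset_rfl, fun β hβ => ?_⟩
      rcases Set.eq_empty_or_nonempty (D β) with h0 | hne
      · rw [h0]; exact Set.disjoint_empty _
      · exact (hemp ⟨D β, β, ⟨hβ, hne⟩, rfl⟩).elim
    have h𝔇sub : D '' {β : ι | β < α ∧ (D β).Nonempty} ⊆ cb.base := by
      intro d hd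
      obtain ⟨β, _, hne, rfl⟩ := hmem d hd
      exact ((hPQ β).1 hne).1.1
    have h𝔇nonempty : ∀ d ∈ D '' {β : ι | β < α ∧ (D β).Nonempty}, d.Nonempty := by
      intro d hd
      obtain ⟨β, _, hne, rfl⟩ := hmem d hd
      exact hne
    have h𝔇pd : (D '' {β : ι | β < α ∧ (D β).Nonempty}).Pairwise Disjoint := by
      intro d₁ hd₁ d₂ hd₂ hne
      obtain ⟨β₁, _, _, rfl⟩ := hmem d₁ hd₁
      obtain ⟨β₂, _, _, rfl⟩ := hmem d₂ hd₂
      exact hdisj β₁ β₂ (fun hh => hne (by rw [hh]))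
    have h𝔇card : Cardinal.mk ↥(D '' {β : ι | β < α ∧ (D β).Nonempty})
        < Cardinal.mk ↥cb.base := by
      calc Cardinal.mk ↥(D '' {β : ι | β < α ∧ (D β).Nonempty})
          ≤ Cardinal.mk ↥(D '' Set.Iio α) := by
            apply Cardinal.mk_le_mk_of_subset
            exact Set.image_mono (fun β hβ => hβ.1)
        _ ≤ Cardinal.mk ↥(Set.Iio α) := Cardinal.mk_image_le
        _ < Cardinal.mk ↥cb.base := Cardinal.mk_Iio_ord_toType α
    have hex : ∃ C ∈ cb.base, C.Nonempty ∧
        C ⊆ (e α : Set X) ∩ ⋃₀ (D '' {β : ι | β < α ∧ (D β).Nonempty}) := by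
      by_contra hnex
      obtain ⟨C, hCb, hCne, hCsub, hCd⟩ := cb.ax2b (e α) hA.1 hA.2 _ h𝔇sub h𝔇ne
        h𝔇nonempty h𝔇pd h𝔇card hnex
      apply hnc
      refine ⟨C, ⟨hCb, hCne⟩, hCsub, fun β hβ => ?_⟩
      rcases Set.eq_empty_or_nonempty (D β) with h0 | hne
      · rw [h0]; exact Set.disjoint_empty _
      · exact hCd (D β) ⟨β, ⟨hβ, hne⟩, rfl⟩
    obtain ⟨d, hd, C, hCb, hCne, hCsub⟩ := cb.ax2a (e α) hA.1 hA.2 _ h𝔇sub h𝔇ne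
      h𝔇nonempty h𝔇pd h𝔇card hex
    obtain ⟨β, _, hne, rfl⟩ := hmem d hd
    exact ⟨β, hne, C, ⟨hCb, hCne⟩, hCsub⟩
  have hK' : ∀ A, cb.IsRegion A → ∃ β : ι, (D β).Nonempty ∧
      ∃ C, cb.IsRegion C ∧ C ⊆ A ∩ D β := by
    intro A hA
    have hEA : (e (e.symm ⟨A, hA.1⟩) : Set X) = A := by rw [e.apply_symm_apply]
    obtain ⟨β, hβne, C, hC, hCsub⟩ := hK (e.symm ⟨A, hA.1⟩) (by rw [hEA]; exact hA)
    exact ⟨β, hβne, C, hC, by rwa [hEA] at hCsub⟩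
  let g : ι → ℕ → Set X := fun α =>
    if hα : (D α).Nonempty then (((hPQ α).1 hα).2.2.1).choose else fun _ => ∅
  have hg : ∀ α : ι, ∀ hα : (D α).Nonempty,
      (∀ n, cb.Singular (g α n)) ∧ S ∩ D α = ⋃ n, g α n := by
    intro α hα
    have hgα : g α = (((hPQ α).1 hα).2.2.1).choose := dif_pos hα
    rw [hgα]
    exact (((hPQ α).1 hα).2.2.1).choose_spec
  let T : ℕ → Set X := fun n => ⋃ α : ι, g α n ∩ D α
  have hTsing : ∀ n, cb.Singular (T n) := by
    intro n A hA
    obtain ⟨β, hβne, C, hC, hCsub⟩ := hK' A hA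
    obtain ⟨C', hC', hC'sub, hC'd⟩ := (hg β hβne).1 n C hC
    refine ⟨C', hC', hC'sub.trans (hCsub.trans Set.inter_subset_left), ?_⟩
    rw [Set.disjoint_left]
    intro x hxC' hxT
    obtain ⟨γ, hγ⟩ := Set.mem_iUnion.mp hxT
    have hxDβ : x ∈ D β := (hCsub (hC'sub hxC')).2
    by_cases hγβ : γ = β
    · subst hγβ
      exact Set.disjoint_left.mp hC'd hxC' hγ.1
    · exact Set.disjoint_left.mp (hdisj γ β hγβ) hγ.2 hxDβ
  have hcomp : cb.Singular (⋃ α : ι, D α)ᶜ := by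
    intro A hA
    obtain ⟨β, hβne, C, hC, hCsub⟩ := hK' A hA
    refine ⟨C, hC, hCsub.trans Set.inter_subset_left, ?_⟩
    rw [Set.disjoint_left]
    intro x hxC hxc
    exact hxc (Set.mem_iUnion.mpr ⟨β, (hCsub hxC).2⟩)
  refine ⟨fun n => Nat.casesOn n ((⋃ α : ι, D α)ᶜ ∩ S) (fun m => T m ∩ S), ?_, ?_⟩
  · intro n
    cases n with
    | zero => exact hmono _ _ Set.inter_subset_left hcomp
    | succ m => exact hmono _ _ Set.inter_subset_left (hTsing m)
  · apply Set.Subset.antisymm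
    · intro x hx
      by_cases hxD : ∃ α : ι, x ∈ D α
      · obtain ⟨α, hα⟩ := hxD
        have hne : (D α).Nonempty := ⟨x, hα⟩
        have hx2 : x ∈ ⋃ n, g α n := by rw [← (hg α hne).2]; exact ⟨hx, hα⟩
        obtain ⟨n, hn⟩ := Set.mem_iUnion.mp hx2
        exact Set.mem_iUnion.mpr ⟨n + 1, ⟨Set.mem_iUnion.mpr ⟨α, hn, hα⟩, hx⟩⟩
      · exact Set.mem_iUnion.mpr ⟨0, ⟨by simpa using hxD, hx⟩⟩
    · intro x hx
      obtain ⟨n, hn⟩ := Set.mem_iUnion.mp hx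
      cases n with
      | zero => exact hn.2
      | succ m => exact hn.2

/-- If `B` is an abundant Baire set, then there exists a region `C`
such that `C \ B` is meager. -/
theorem stmt_7 {X : Type*} (cb : CategoryBase X) (B : Set X)
    (hab : cb.Abundant B) (hB : cb.BaireSet B) :
    ∃ C, cb.IsRegion C ∧ cb.Meager (C \ B) := by
  by_contra hcon
  push_neg at hcon
  apply hab
  apply cb.meager_of_loc
  intro A hA
  obtain ⟨C, hC, hCA, hm | hm⟩ := hB A hA
  · exact ⟨C, hC, hCA, hm⟩
  · exact absurd (show cb.Meager (C \ B) by rwa [Set.diff_eq, Set.inter_comm])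
      (hcon C hC)
end

section
/- Let (X, C) be a category base and D a D-operator such that every region contains a nonempty D-open set. Then every set that is meager in (X, C) is of the first category in the D-topology τ(D). -/
open Set

/-- If every region contains a nonempty `D`-open set, then every meager set of
the category base is of first category in the `D`-topology. -/
theorem stmt_12 {X : Type*} (cb : CategoryBase X) (D : Set X → Set X)
    (hX : D Set.univ = Set.univ)
    (hmeager : ∀ S : Set X, cb.Meager S → D S = ∅)
    (hadd : ∀ S T : Set X, D (S ∪ T) = D S ∪ D T)
    (hreg : ∀ A, cb.IsRegion A → ∃ U, DOpen D U ∧ U.Nonempty ∧ U ⊆ A) :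
    ∀ S : Set X, cb.Meager S → TauFirstCategory D S := by
  -- subsets of meager sets are meager
  have hsub : ∀ S T : Set X, T ⊆ S → cb.Meager S → cb.Meager T := by
    rintro S T hTS ⟨f, hf, rfl⟩
    refine ⟨fun n => f n ∩ T, fun n A hA => ?_, ?_⟩
    · obtain ⟨B, hB, hBA, hBd⟩ := hf n A hA
      exact ⟨B, hB, hBA, hBd.mono_right (inter_subset_left)⟩
    · ext x; simp only [mem_iUnion, mem_inter_iff]
      constructor
      · intro hx; obtain ⟨n, hn⟩ := mem_iUnion.1 (hTS hx); exact ⟨n, hn, hx⟩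
      · rintro ⟨n, _, hx⟩; exact hx
  intro S hS
  refine ⟨fun _ => S, fun n => ?_, (iUnion_const S).symm⟩
  intro U hU hUne
  refine ⟨U \ S, ?_, ?_, diff_subset, disjoint_sdiff_left⟩
  · have : D ((U \ S)ᶜ) = D (Uᶜ) ∪ D S := by
      rw [show (U \ S)ᶜ = Uᶜ ∪ S by rw [diff_eq, compl_inter, compl_compl], hadd]
    rw [DOpen, this, hmeager S hS, union_empty]
    exact hU.trans (by rw [diff_eq, compl_inter]; exact subset_union_left)
  · by_contra h
    rw [not_nonempty_iff_eq_empty, diff_eq_empty] at h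
    have hUm : cb.Meager U := hsub S U h hS
    have : D (U ∪ Uᶜ) = ∅ ∪ D (Uᶜ) := by rw [hadd, hmeager U hUm]
    rw [union_compl_self, hX, empty_union] at this
    have : (Uᶜ : Set X) = univ := univ_subset_iff.1 (this ▸ hU)
    exact hUne.ne_empty (by simpa [compl_univ_iff] using this)
end
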